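/- Let 𝕀 be an interval hypergraph on [n] that is closed under intersection and let A_1, …, A_q be acyclic orientations of 𝕀. Define the orientation O of 𝕀 by O(I) = min( I ∖ ⋃_{p ∈ [q]} ⋃ { [min(J), A_p(J)) : J ∈ 𝕀, A_p(J) ∈ I } ) for each I ∈ 𝕀, where [min(J), A_p(J)) = {min(J), …, A_p(J) - 1}. Then O is acyclic and O is the least upper bound of {A_1, …, A_q} in the hypergraphic poset P_𝕀. -/
import Mathlib


namespace IHL

/-- The hyperedges of a hypergraph, as a subtype. -/
abbrev Edge (𝕀 : Finset (Finset ℕ)) : Type := {H : Finset ℕ // H ∈ 𝕀}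

/-- `ℋ` is a hypergraph on `[n] = {1,…,n}`: hyperedges are nonempty subsets of `[n]`
and all singletons belong to `ℋ`. -/
def IsHypergraph (n : ℕ) (ℋ : Finset (Finset ℕ)) : Prop :=
  (∀ H ∈ ℋ, H.Nonempty ∧ H ⊆ Finset.Icc 1 n) ∧
    ∀ i, 1 ≤ i → i ≤ n → ({i} : Finset ℕ) ∈ ℋ

/-- `𝕀` is an interval hypergraph on `[n]`: hyperedges are intervals `[a,b] ⊆ [n]`
and all singletons belong to `𝕀`. -/
def IsIntervalHypergraph (n : ℕ) (𝕀 : Finset (Finset ℕ)) : Prop :=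
  (∀ H ∈ 𝕀, ∃ a b, 1 ≤ a ∧ a ≤ b ∧ b ≤ n ∧ H = Finset.Icc a b) ∧
    ∀ i, 1 ≤ i → i ≤ n → ({i} : Finset ℕ) ∈ 𝕀

/-- An orientation assigns to each hyperedge one of its elements. -/
def IsOrientation (𝕀 : Finset (Finset ℕ)) (O : Edge 𝕀 → ℕ) : Prop :=
  ∀ H : Edge 𝕀, O H ∈ H.1

/-- Acyclicity: there is no cyclic sequence `H_0, …, H_k` with `k ≥ 2`, `H_k = H_0`, and
`O (H (p+1)) ∈ H p \ {O (H p)}` for all `p < k`. -/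
def IsAcyclic (𝕀 : Finset (Finset ℕ)) (O : Edge 𝕀 → ℕ) : Prop :=
  ¬∃ (k : ℕ) (H : ℕ → Edge 𝕀), 2 ≤ k ∧ H k = H 0 ∧
    ∀ p < k, O (H (p + 1)) ∈ (H p).1 ∧ O (H (p + 1)) ≠ O (H p)

/-- An acyclic orientation, i.e. an element of the hypergraphic poset. -/
def AcycOr (𝕀 : Finset (Finset ℕ)) (O : Edge 𝕀 → ℕ) : Prop :=
  IsOrientation 𝕀 O ∧ IsAcyclic 𝕀 O

/-- Increasing flip from `O` to `O'` flipping `i` to `j`. -/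
def IsIncFlip (n : ℕ) (𝕀 : Finset (Finset ℕ)) (i j : ℕ) (O O' : Edge 𝕀 → ℕ) : Prop :=
  O ≠ O' ∧ 1 ≤ i ∧ i < j ∧ j ≤ n ∧
    ∀ H : Edge 𝕀,
      (O H ≠ O' H → O H = i ∧ O' H = j) ∧
      (i ∈ H.1 → j ∈ H.1 → (O H = i ↔ O' H = j))

/-- One increasing flip step between acyclic orientations. -/
def FlipStep (n : ℕ) (𝕀 : Finset (Finset ℕ)) (O O' : Edge 𝕀 → ℕ) : Prop :=
  AcycOr 𝕀 O ∧ AcycOr 𝕀 O' ∧ ∃ i j, IsIncFlip n 𝕀 i j O O'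

/-- The order of the hypergraphic poset `P_𝕀`: reflexive-transitive closure of
the increasing flip relation on acyclic orientations. -/
def leP (n : ℕ) (𝕀 : Finset (Finset ℕ)) : (Edge 𝕀 → ℕ) → (Edge 𝕀 → ℕ) → Prop :=
  Relation.ReflTransGen (FlipStep n 𝕀)

/-- Strict order of the hypergraphic poset. -/
def ltP (n : ℕ) (𝕀 : Finset (Finset ℕ)) (A B : Edge 𝕀 → ℕ) : Prop :=
  leP n 𝕀 A B ∧ A ≠ B

/-- `B` covers `A` in `P_𝕀`. -/
def CoversP (n : ℕ) (𝕀 : Finset (Finset ℕ)) (A B : Edge 𝕀 → ℕ) : Prop :=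
  ltP n 𝕀 A B ∧ ¬∃ C, AcycOr 𝕀 C ∧ ltP n 𝕀 A C ∧ ltP n 𝕀 C B

/-- `𝕀` is closed under intersection. -/
def ClosedUnderIntersection (𝕀 : Finset (Finset ℕ)) : Prop :=
  ∀ I ∈ 𝕀, ∀ J ∈ 𝕀, (I ∩ J).Nonempty → I ∩ J ∈ 𝕀

/-- `π` is a permutation of `[n]` (it fixes everything outside `[1,n]`). -/
def IsPermOn (n : ℕ) (π : Equiv.Perm ℕ) : Prop :=
  ∀ x, x ∉ Finset.Icc 1 n → π x = x

/-- The surjection `Or` from permutations to acyclic orientations: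
`Or_π (H) = π (min {p : π p ∈ H})`. -/
noncomputable def orMap (𝕀 : Finset (Finset ℕ)) (π : Equiv.Perm ℕ) : Edge 𝕀 → ℕ :=
  fun H => π (sInf {p | π p ∈ H.1})

/-- The weak order on permutations of `[n]`, via inclusion of inversion sets. -/
def weakLe (n : ℕ) (σ τ : Equiv.Perm ℕ) : Prop :=
  ∀ a b, 1 ≤ a → a < b → b ≤ n → σ.symm b < σ.symm a → τ.symm b < τ.symm a

/-- `π` contains the pattern 231. -/
def Contains231 (n : ℕ) (π : Equiv.Perm ℕ) : Prop :=
  ∃ p q r, 1 ≤ p ∧ p < q ∧ q < r ∧ r ≤ n ∧ π r < π p ∧ π p < π q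

/-- `π` contains the pattern 213. -/
def Contains213 (n : ℕ) (π : Equiv.Perm ℕ) : Prop :=
  ∃ p q r, 1 ≤ p ∧ p < q ∧ q < r ∧ r ≤ n ∧ π q < π p ∧ π p < π r

/-- The partial order `≺_A`: transitive closure of `A H ≺ h` for `h ∈ H \ {A H}`. -/
def prec (𝕀 : Finset (Finset ℕ)) (A : Edge 𝕀 → ℕ) : ℕ → ℕ → Prop :=
  Relation.TransGen fun a b => ∃ H : Edge 𝕀, A H = a ∧ b ∈ H.1 ∧ b ≠ a

/-- The distributivity condition on interval hypergraphs: for all `I, J ∈ 𝕀` with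
`I ⊈ J`, `J ⊈ I` and `I ∩ J ≠ ∅`, the intersection `I ∩ J` is in `𝕀` and is initial
or final in any `K ∈ 𝕀` containing it. -/
def IsDistribHG (𝕀 : Finset (Finset ℕ)) : Prop :=
  ∀ I ∈ 𝕀, ∀ J ∈ 𝕀, ¬I ⊆ J → ¬J ⊆ I → (I ∩ J).Nonempty →
    (I ∩ J ∈ 𝕀 ∧ ∀ K ∈ 𝕀, I ∩ J ⊆ K → ((I ∩ J).min = K.min ∨ (I ∩ J).max = K.max))

/-- `j ∈ 𝒥_𝕀 = ⋃_{I ∈ 𝕀} (I \ {min I})`. -/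
def InJI (𝕀 : Finset (Finset ℕ)) (j : ℕ) : Prop :=
  ∃ I ∈ 𝕀, j ∈ I ∧ ∃ y ∈ I, y < j

/-- `Jj` is the interval `J_j = ⋂ {I ∈ 𝕀 : j ∈ I \ {min I}}`. -/
def IsJj (𝕀 : Finset (Finset ℕ)) (j : ℕ) (Jj : Finset ℕ) : Prop :=
  ∀ x, x ∈ Jj ↔ ∀ I ∈ 𝕀, j ∈ I → (∃ y ∈ I, y < j) → x ∈ I

/-- `Aj` is the orientation `A_j` (where `μj = min J_j`):
`A_j (J) = j` if `j ∈ J` and `min J = μ_j`, and `A_j (J) = min J` otherwise. -/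
def IsAj (𝕀 : Finset (Finset ℕ)) (j μj : ℕ) (Aj : Edge 𝕀 → ℕ) : Prop :=
  ∀ J : Edge 𝕀,
    (j ∈ J.1 ∧ IsLeast (J.1 : Set ℕ) μj → Aj J = j) ∧
    (¬(j ∈ J.1 ∧ IsLeast (J.1 : Set ℕ) μj) → IsLeast (J.1 : Set ℕ) (Aj J))

/-- `Jij` is the interval `J_{ij} = ⋂ {I ∈ 𝕀 : {i,j} ⊆ I}`. -/
def IsJij (𝕀 : Finset (Finset ℕ)) (i j : ℕ) (Jij : Finset ℕ) : Prop :=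
  ∀ x, x ∈ Jij ↔ ∀ I ∈ 𝕀, i ∈ I → j ∈ I → x ∈ I

/-- `(i,j) ∈ ℐ𝒥_𝕀`, where `μij = min J_{ij}`: both lie in a common hyperedge and
`i = max ([μ_{ij}, j) \ ⋃ {J \ {min J} : J ∈ 𝕀, J ⊆ [μ_{ij}, j)})`. -/
def InIJ (n : ℕ) (𝕀 : Finset (Finset ℕ)) (i j μij : ℕ) : Prop :=
  1 ≤ i ∧ i < j ∧ j ≤ n ∧ (∃ I ∈ 𝕀, i ∈ I ∧ j ∈ I) ∧
    IsGreatest {m | μij ≤ m ∧ m < j ∧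
      ∀ J ∈ 𝕀, (∀ x ∈ J, μij ≤ x ∧ x < j) → m ∈ J → ∀ y ∈ J, m ≤ y} i

/-- `Aij` is the orientation `A_{ij}` (where `μij = min J_{ij}`):
`A_{ij} (J) = j` if `j ∈ J` and `min J ≥ μ_{ij}`, and `A_{ij} (J) = min J` otherwise. -/
def IsAij (𝕀 : Finset (Finset ℕ)) (j μij : ℕ) (Aij : Edge 𝕀 → ℕ) : Prop :=
  ∀ J : Edge 𝕀,
    (j ∈ J.1 ∧ (∀ x ∈ J.1, μij ≤ x) → Aij J = j) ∧
    (¬(j ∈ J.1 ∧ (∀ x ∈ J.1, μij ≤ x)) → IsLeast (J.1 : Set ℕ) (Aij J))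

/-- The reversal `x ↦ n - x + 1` on `[n]`. -/
def revPt (n x : ℕ) : ℕ := n - x + 1

/-- The reversed hypergraph `ℋ↔`. -/
def revHG (n : ℕ) (ℋ : Finset (Finset ℕ)) : Finset (Finset ℕ) :=
  ℋ.image fun H => H.image (revPt n)

section Aux

variable {n : ℕ} {𝕀 : Finset (Finset ℕ)}

lemma edge_nonempty (h𝕀 : IsIntervalHypergraph n 𝕀) (H : Edge 𝕀) : H.1.Nonempty := by
  obtain ⟨a, b, h1, hab, hbn, hH⟩ := h𝕀.1 H.1 H.2
  exact hH ▸ Finset.nonempty_Icc.mpr hab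

lemma edge_subset (h𝕀 : IsIntervalHypergraph n 𝕀) (H : Edge 𝕀) :
    H.1 ⊆ Finset.Icc 1 n := by
  obtain ⟨a, b, h1, hab, hbn, hH⟩ := h𝕀.1 H.1 H.2
  rw [hH]
  intro x hx
  simp only [Finset.mem_Icc] at *
  omega

lemma edge_interval (h𝕀 : IsIntervalHypergraph n 𝕀) (H : Edge 𝕀) {x y z : ℕ}
    (hx : x ∈ H.1) (hy : y ∈ H.1) (hxz : x ≤ z) (hzy : z ≤ y) : z ∈ H.1 := by
  obtain ⟨a, b, h1, hab, hbn, hH⟩ := h𝕀.1 H.1 H.2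
  rw [hH] at hx hy ⊢
  simp only [Finset.mem_Icc] at *
  omega

lemma edge_above (h𝕀 : IsIntervalHypergraph n 𝕀) (H : Edge 𝕀) {x v : ℕ}
    (hx : x ∈ H.1) (hv : v ∉ H.1) (hxv : x < v) : ∀ z ∈ H.1, z < v := by
  intro z hz
  by_contra h
  exact hv (edge_interval h𝕀 H hx hz hxv.le (le_of_not_gt h))

lemma no_two_cycle {A : Edge 𝕀 → ℕ} (hA : IsAcyclic 𝕀 A) (I J : Edge 𝕀)
    (h1 : A J ∈ I.1) (h2 : A I ∈ J.1) (h3 : A J ≠ A I) : False := by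
  apply hA
  refine ⟨2, fun p => if p = 1 then J else I, le_refl 2, by norm_num, ?_⟩
  intro p hp
  interval_cases p
  · simpa using ⟨h1, h3⟩
  · simpa using ⟨h2, fun h => h3 h.symm⟩

lemma value_eq_of_subset {A : Edge 𝕀 → ℕ} (hA : IsAcyclic 𝕀 A)
    (hor : IsOrientation 𝕀 A) (K I : Edge 𝕀) (hKI : K.1 ⊆ I.1)
    (h : A I ∈ K.1) : A K = A I := by
  by_contra hne
  exact no_two_cycle hA I K (hKI (hor K)) h hne

lemma acyclic_of_rank {D : Edge 𝕀 → ℕ} (r : ℕ → ℕ)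
    (hr : ∀ H : Edge 𝕀, ∀ h ∈ H.1, h ≠ D H → r (D H) < r h) : IsAcyclic 𝕀 D := by
  rintro ⟨k, H, hk, hk0, hcyc⟩
  have mono : ∀ p ≤ k, 1 ≤ p → r (D (H 0)) < r (D (H p)) := by
    intro p hp h1
    induction p with
    | zero => omega
    | succ t ih =>
      have hcyct := hcyc t (by omega)
      have step : r (D (H t)) < r (D (H (t + 1))) :=
        hr (H t) _ hcyct.1 hcyct.2
      rcases Nat.eq_zero_or_pos t with h0 | h0
      · subst h0; exact step
      · exact lt_trans (ih (by omega) h0) step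
  have := mono k le_rfl (by omega)
  rw [hk0] at this
  omega

end Aux

section Join

variable {n : ℕ} {𝕀 : Finset (Finset ℕ)} {ι : Type*}

/-- The set of allowed values in a hyperedge for the join construction. -/
def joinS (f : ι → Edge 𝕀 → ℕ) (H : Edge 𝕀) : Set ℕ :=
  {m | m ∈ H.1 ∧ ∀ (p : ι) (J : Edge 𝕀),
    f p J ∈ H.1 → ¬((∃ x ∈ J.1, x ≤ m) ∧ m < f p J)}

/-- The join orientation of a family of orientations. -/
noncomputable def joinO (f : ι → Edge 𝕀 → ℕ) (H : Edge 𝕀) : ℕ := sInf (joinS f H)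

lemma max_mem_joinS (h𝕀 : IsIntervalHypergraph n 𝕀) (f : ι → Edge 𝕀 → ℕ) (H : Edge 𝕀) :
    H.1.max' (edge_nonempty h𝕀 H) ∈ joinS f H := by
  refine ⟨H.1.max'_mem _, ?_⟩
  rintro p J hJ ⟨hex, hlt⟩
  have := H.1.le_max' _ hJ
  omega

lemma joinS_nonempty (h𝕀 : IsIntervalHypergraph n 𝕀) (f : ι → Edge 𝕀 → ℕ) (H : Edge 𝕀) :
    (joinS f H).Nonempty := ⟨_, max_mem_joinS h𝕀 f H⟩

lemma joinO_isLeast (h𝕀 : IsIntervalHypergraph n 𝕀) (f : ι → Edge 𝕀 → ℕ) (H : Edge 𝕀) :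
    IsLeast (joinS f H) (joinO f H) :=
  ⟨Nat.sInf_mem (joinS_nonempty h𝕀 f H), fun _ hb => Nat.sInf_le hb⟩

lemma joinO_mem (h𝕀 : IsIntervalHypergraph n 𝕀) (f : ι → Edge 𝕀 → ℕ) (H : Edge 𝕀) :
    joinO f H ∈ H.1 := (joinO_isLeast h𝕀 f H).1.1

lemma joinO_ge (h𝕀 : IsIntervalHypergraph n 𝕀) {f : ι → Edge 𝕀 → ℕ} (p : ι)
    (hf : IsOrientation 𝕀 (f p)) (H : Edge 𝕀) : f p H ≤ joinO f H := by
  have h := (joinO_isLeast h𝕀 f H).1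
  by_contra hlt
  exact h.2 p H (hf H) ⟨⟨joinO f H, h.1, le_refl _⟩, by omega⟩

lemma joinO_blocked (h𝕀 : IsIntervalHypergraph n 𝕀) {f : ι → Edge 𝕀 → ℕ} {H : Edge 𝕀}
    {x : ℕ} (hx : x ∈ H.1) (hlt : x < joinO f H) :
    ∃ p J, f p J ∈ H.1 ∧ (∃ z ∈ J.1, z ≤ x) ∧ x < f p J := by
  by_contra h
  push_neg at h
  have hmem : x ∈ joinS f H := by
    refine ⟨hx, ?_⟩
    rintro p J hJ ⟨hex, hv⟩
    exact absurd hv (Nat.not_lt.mpr (h p J hJ hex))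
  have h2 : joinO f H ≤ x := Nat.sInf_le hmem
  omega

lemma joinO_acyclic (h𝕀 : IsIntervalHypergraph n 𝕀) (f : ι → Edge 𝕀 → ℕ) :
    IsAcyclic 𝕀 (joinO f) := by
  rintro ⟨k, H, hk, hk0, hcyc⟩
  obtain ⟨m, hmR, hmin⟩ := Finset.exists_min_image (Finset.range k)
    (fun p => joinO f (H p)) ⟨0, Finset.mem_range.mpr (by omega)⟩
  have hmk : m < k := Finset.mem_range.mp hmR
  have hmin' : ∀ p < k, joinO f (H m) ≤ joinO f (H p) := fun p hp =>
    hmin p (Finset.mem_range.mpr hp)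
  set x := joinO f (H m) with hxdef
  -- the predecessor index of m in the cycle
  set q0 := (m + k - 1) % k with hq0
  have hq0k : q0 < k := Nat.mod_lt _ (by omega)
  have hsucc : H (q0 + 1) = H m := by
    rcases Nat.eq_zero_or_pos m with hm | hm
    · have hq : q0 = k - 1 := by
        rw [hq0, hm]
        simpa using Nat.mod_eq_of_lt (by omega)
      rw [hq, (by omega : k - 1 + 1 = k), hk0, hm]
    · have hq : q0 = m - 1 := by
        rw [hq0]
        have h2 : m + k - 1 = (m - 1) + 1 * k := by omega
        rw [h2, Nat.add_mul_mod_self_right]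
        exact Nat.mod_eq_of_lt (by omega)
      rw [hq, (by omega : m - 1 + 1 = m)]
  have hcq0 := hcyc q0 hq0k
  rw [hsucc] at hcq0
  have hxlt : x < joinO f (H q0) :=
    lt_of_le_of_ne (hmin' q0 hq0k) hcq0.2
  obtain ⟨p, J, hvmem, ⟨z, hzJ, hzx⟩, hxv⟩ := joinO_blocked h𝕀 hcq0.1 hxlt
  set v := f p J with hvdef
  have key : ∀ t < k, ∀ y ∈ (H ((m + t) % k)).1, y < v := by
    intro t
    induction t with
    | zero =>
      intro _ y hy
      rw [Nat.add_zero, Nat.mod_eq_of_lt hmk] at hy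
      have hvnot : v ∉ (H m).1 := by
        intro hvm
        exact ((joinO_isLeast h𝕀 f (H m)).1).2 p J hvm ⟨⟨z, hzJ, hzx⟩, hxv⟩
      exact edge_above h𝕀 (H m) (joinO_mem h𝕀 f (H m)) hvnot hxv y hy
    | succ t ih =>
      intro ht y hy
      have ihh := ih (by omega)
      set q := (m + t) % k with hqdef
      have hqk : q < k := Nat.mod_lt _ (by omega)
      have hq'lt : (m + (t + 1)) % k < k := Nat.mod_lt _ (by omega)
      have hstep : H ((m + (t + 1)) % k) = H (q + 1) := by
        have h1 : (m + (t + 1)) % k = (q + 1) % k := by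
          rw [hqdef, (by omega : m + (t + 1) = (m + t) + 1), Nat.add_mod (m + t) 1 k,
            Nat.mod_eq_of_lt (show (1:ℕ) < k by omega)]
        rcases eq_or_lt_of_le (Nat.succ_le_of_lt hqk) with he | hlt2
        · have he' : q + 1 = k := he
          rw [h1, he', Nat.mod_self, hk0]
        · rw [h1, Nat.mod_eq_of_lt hlt2]
      have hcq := hcyc q hqk
      set w := joinO f (H (q + 1)) with hwdef
      have hwq' : w = joinO f (H ((m + (t + 1)) % k)) := by rw [hstep]
      have hwlt : w < v := ihh w hcq.1
      have hwx : x ≤ w := by rw [hwq'] at *; exact hmin' _ hq'lt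
      have hvnot : v ∉ (H ((m + (t + 1)) % k)).1 := by
        intro hvm
        refine ((joinO_isLeast h𝕀 f (H ((m + (t + 1)) % k))).1).2 p J hvm
          ⟨⟨z, hzJ, by omega⟩, by rw [← hwq']; exact hwlt⟩
      have hwmem : w ∈ (H ((m + (t + 1)) % k)).1 := by
        rw [hwq']; exact joinO_mem h𝕀 f _
      exact edge_above h𝕀 _ hwmem hvnot hwlt y hy
  have hfin := key (k - 1) (by omega)
  have : (m + (k - 1)) % k = q0 := by rw [hq0, (by omega : m + k - 1 = m + (k - 1))]
  rw [this] at hfin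
  exact absurd (hfin v hvmem) (by omega)

lemma joinO_le_ub (h𝕀 : IsIntervalHypergraph n 𝕀) (hcl : ClosedUnderIntersection 𝕀)
    {f : ι → Edge 𝕀 → ℕ} (hf : ∀ p, AcycOr 𝕀 (f p)) {C : Edge 𝕀 → ℕ}
    (hC : AcycOr 𝕀 C) (hle : ∀ p H, f p H ≤ C H) (H : Edge 𝕀) :
    joinO f H ≤ C H := by
  apply Nat.sInf_le
  refine ⟨hC.1 H, ?_⟩
  rintro p J hJ ⟨⟨z, hzJ, hzC⟩, hCJ⟩
  have hCJmem : C H ∈ J.1 := edge_interval h𝕀 J hzJ ((hf p).1 J) hzC hCJ.le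
  have hneK : (H.1 ∩ J.1).Nonempty := ⟨C H, Finset.mem_inter.mpr ⟨hC.1 H, hCJmem⟩⟩
  set K : Edge 𝕀 := ⟨H.1 ∩ J.1, hcl H.1 H.2 J.1 J.2 hneK⟩ with hKdef
  have hCHK : C H ∈ K.1 := Finset.mem_inter.mpr ⟨hC.1 H, hCJmem⟩
  have hCK : C K = C H :=
    value_eq_of_subset hC.2 hC.1 K H Finset.inter_subset_left hCHK
  have h1 : f p K ≤ C H := hCK ▸ hle p K
  have h2 : f p K ∈ J.1 := Finset.inter_subset_right ((hf p).1 K)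
  have h3 : f p J ∈ K.1 := Finset.mem_inter.mpr ⟨hJ, (hf p).1 J⟩
  exact no_two_cycle (hf p).2 J K h2 h3 (by omega)

end Join

section Flip

variable {n : ℕ} {𝕀 : Finset (Finset ℕ)}

lemma exists_flipstep (h𝕀 : IsIntervalHypergraph n 𝕀) (hcl : ClosedUnderIntersection 𝕀)
    {A B : Edge 𝕀 → ℕ} (hA : AcycOr 𝕀 A) (hB : AcycOr 𝕀 B)
    (hle : ∀ H, A H ≤ B H) (hne : A ≠ B) :
    ∃ A', FlipStep n 𝕀 A A' ∧ (∀ H, A H ≤ A' H ∧ A' H ≤ B H) ∧ A ≠ A' := by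
  classical
  have hdiff : (𝕀.attach.filter (fun H => A H ≠ B H)).Nonempty := by
    rcases Function.ne_iff.mp hne with ⟨H0, h0⟩
    exact ⟨H0, Finset.mem_filter.mpr ⟨Finset.mem_attach _ _, h0⟩⟩
  set diffF := 𝕀.attach.filter (fun H => A H ≠ B H) with hdiffF
  set i := (diffF.image A).max' (hdiff.image A) with hidef
  have himax : ∀ H : Edge 𝕀, A H ≠ B H → A H ≤ i := fun H h =>
    Finset.le_max' _ _ (Finset.mem_image_of_mem A
      (Finset.mem_filter.mpr ⟨Finset.mem_attach _ _, h⟩))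
  set TF := diffF.filter (fun H => A H = i) with hTFdef
  have hTne : TF.Nonempty := by
    obtain ⟨H', hH', hAH'⟩ := Finset.mem_image.mp ((diffF.image A).max'_mem (hdiff.image A))
    exact ⟨H', Finset.mem_filter.mpr ⟨hH', hAH'⟩⟩
  set j := (TF.image B).max' (hTne.image B) with hjdef
  have hjmax : ∀ H : Edge 𝕀, A H = i → A H ≠ B H → B H ≤ j := fun H h1 h2 =>
    Finset.le_max' _ _ (Finset.mem_image_of_mem B
      (Finset.mem_filter.mpr ⟨Finset.mem_filter.mpr ⟨Finset.mem_attach _ _, h2⟩, h1⟩))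
  obtain ⟨H₁, hH₁T, hBH₁0⟩ := Finset.mem_image.mp ((TF.image B).max'_mem (hTne.image B))
  have hBH₁ : B H₁ = j := by rw [hjdef]; exact hBH₁0
  have hAH₁ : A H₁ = i := (Finset.mem_filter.mp hH₁T).2
  have hABH₁ : A H₁ ≠ B H₁ := (Finset.mem_filter.mp (Finset.mem_filter.mp hH₁T).1).2
  have hij : i < j := by
    rw [← hAH₁, ← hBH₁]
    exact lt_of_le_of_ne (hle H₁) hABH₁
  have hiH₁ : i ∈ H₁.1 := hAH₁ ▸ hA.1 H₁
  have hjH₁ : j ∈ H₁.1 := hBH₁ ▸ hB.1 H₁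
  set μ := H₁.1.min' (edge_nonempty h𝕀 H₁) with hμdef
  have hμmem : μ ∈ H₁.1 := H₁.1.min'_mem _
  have hμi : μ ≤ i := H₁.1.min'_le _ hiH₁
  -- the elementary orientation D
  set D : Edge 𝕀 → ℕ := fun J =>
    if j ∈ J.1 ∧ ∀ x ∈ J.1, μ ≤ x then j else J.1.min' (edge_nonempty h𝕀 J) with hDdef
  have hDor : IsOrientation 𝕀 D := by
    intro J
    rw [hDdef]
    dsimp only
    split_ifs with hc
    · exact hc.1
    · exact J.1.min'_mem _
  have hDH₁ : D H₁ = j := by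
    rw [hDdef]
    dsimp only
    rw [if_pos ⟨hjH₁, fun x hx => H₁.1.min'_le _ hx⟩]
  have hDacyc : IsAcyclic 𝕀 D := by
    set r : ℕ → ℕ := fun x => if x = j then 2 * μ else if x < μ then 2 * x else 2 * x + 1
      with hrdef
    have hrj : r j = 2 * μ := by rw [hrdef]; simp
    have hrlt : ∀ x, x ≠ j → x < μ → r x = 2 * x := by
      intro x h1 h2; rw [hrdef]; simp [h1, h2]
    have hrge : ∀ x, x ≠ j → ¬x < μ → r x = 2 * x + 1 := by
      intro x h1 h2; rw [hrdef]; simp [h1, h2]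
    apply acyclic_of_rank r
    intro J h hh hne2
    by_cases hc : j ∈ J.1 ∧ ∀ x ∈ J.1, μ ≤ x
    · have hDJ : D J = j := by rw [hDdef]; dsimp only; rw [if_pos hc]
      rw [hDJ] at hne2 ⊢
      have hμh : μ ≤ h := hc.2 h hh
      rw [hrj, hrge h hne2 (by omega)]
      omega
    · have hDJ : D J = J.1.min' (edge_nonempty h𝕀 J) := by
        rw [hDdef]; dsimp only; rw [if_neg hc]
      rw [hDJ] at hne2 ⊢
      set m := J.1.min' (edge_nonempty h𝕀 J) with hmdef
      have hmlt : m < h := lt_of_le_of_ne (J.1.min'_le _ hh) (fun e => hne2 e.symm)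
      by_cases hmj : m = j
      · have hjμ : μ ≤ j := H₁.1.min'_le _ hjH₁
        have hhj : h ≠ j := by omega
        rw [hmj, hrj, hrge h hhj (by omega)]
        omega
      · by_cases hhj : h = j
        · push_neg at hc
          obtain ⟨x, hx, hxμ⟩ := hc (hhj ▸ hh)
          have hmx : m ≤ x := J.1.min'_le _ hx
          rw [hhj, hrj, hrlt m hmj (by omega)]
          omega
        · have h1 : r m = 2 * m ∨ r m = 2 * m + 1 := by
            by_cases h2 : m < μ
            · exact Or.inl (hrlt m hmj h2)
            · exact Or.inr (hrge m hmj h2)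
          have h2 : r h = 2 * h ∨ r h = 2 * h + 1 := by
            by_cases h3 : h < μ
            · exact Or.inl (hrlt h hhj h3)
            · exact Or.inr (hrge h hhj h3)
          omega
  have hDle : ∀ J, D J ≤ B J := by
    intro J
    rw [hDdef]
    dsimp only
    split_ifs with hc
    · obtain ⟨hjJ, hall⟩ := hc
      by_contra hlt
      push_neg at hlt
      have hBJH₁ : B J ∈ H₁.1 :=
        edge_interval h𝕀 H₁ hμmem hjH₁ (hall _ (hB.1 J)) hlt.le
      exact no_two_cycle hB.2 J H₁ (hBH₁ ▸ hjJ)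
        hBJH₁ (by omega)
    · exact J.1.min'_le _ (hB.1 J)
  -- the join of A and D
  set f : Bool → Edge 𝕀 → ℕ := fun b => if b then A else D with hfdef
  have hftrue : f true = A := rfl
  have hffalse : f false = D := rfl
  have hfac : ∀ b, AcycOr 𝕀 (f b) := by
    intro b; cases b
    · exact ⟨hDor, hDacyc⟩
    · exact hA
  set A' := joinO f with hA'def
  have hA'or : IsOrientation 𝕀 A' := fun H => joinO_mem h𝕀 f H
  have hA'acyc : IsAcyclic 𝕀 A' := joinO_acyclic h𝕀 f
  have hAleA' : ∀ H, A H ≤ A' H := by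
    intro H
    have hor : IsOrientation 𝕀 (f true) := by rw [hftrue]; exact hA.1
    have := joinO_ge (f := f) h𝕀 true hor H
    rw [hftrue] at this
    exact this
  have hA'leB : ∀ H, A' H ≤ B H := fun H =>
    joinO_le_ub h𝕀 hcl hfac hB (fun b H' => by cases b; exacts [hDle H', hle H']) H
  -- claim (b) : unaffected edges
  have claim_b : ∀ I : Edge 𝕀, ¬(A I = i ∧ j ∈ I.1) → A' I = A I := by
    intro I hnI
    have hmem : A I ∈ joinS f I := by
      refine ⟨hA.1 I, ?_⟩
      rintro b J hJ ⟨⟨z, hzJ, hz⟩, hlt⟩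
      cases b
      · -- D-block
        rw [hffalse] at hJ hlt
        by_cases hc : j ∈ J.1 ∧ ∀ x ∈ J.1, μ ≤ x
        · have hDJ : D J = j := by rw [hDdef]; dsimp only; rw [if_pos hc]
          rw [hDJ] at hJ hlt
          -- j ∈ I, A I < j, μ ≤ z ≤ A I
          have hAIne : A I ≠ i := fun h => hnI ⟨h, hJ⟩
          have hμAI : μ ≤ A I := le_trans (hc.2 z hzJ) hz
          have hAIH₁ : A I ∈ H₁.1 := edge_interval h𝕀 H₁ hμmem hjH₁ hμAI hlt.le
          have hneK : (I.1 ∩ H₁.1).Nonempty :=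
            ⟨A I, Finset.mem_inter.mpr ⟨hA.1 I, hAIH₁⟩⟩
          set K : Edge 𝕀 := ⟨I.1 ∩ H₁.1, hcl I.1 I.2 H₁.1 H₁.2 hneK⟩ with hKdef
          have hAIK : A I ∈ K.1 := Finset.mem_inter.mpr ⟨hA.1 I, hAIH₁⟩
          have hjK : j ∈ K.1 := Finset.mem_inter.mpr ⟨hJ, hjH₁⟩
          have hAK : A K = A I :=
            value_eq_of_subset hA.2 hA.1 K I Finset.inter_subset_left hAIK
          have hBK : B K = j := by
            have := value_eq_of_subset hB.2 hB.1 K H₁ Finset.inter_subset_right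
              (hBH₁ ▸ hjK)
            rw [this, hBH₁]
          have hKle : A K ≤ i := himax K (by omega)
          have hiK : i ∈ K.1 := edge_interval h𝕀 K hAIK hjK (by omega) (by omega)
          have hAK2 : A K = i := by
            have := value_eq_of_subset hA.2 hA.1 K H₁ Finset.inter_subset_right
              (hAH₁ ▸ hiK)
            rw [this, hAH₁]
          omega
        · have hDJ : D J = J.1.min' (edge_nonempty h𝕀 J) := by
            rw [hDdef]; dsimp only; rw [if_neg hc]
          rw [hDJ] at hlt
          have := J.1.min'_le _ hzJ
          omega
      · -- A-block: two-cycle with A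
        rw [hftrue] at hJ hlt
        have hAIJ : A I ∈ J.1 := edge_interval h𝕀 J hzJ (hA.1 J) hz hlt.le
        exact no_two_cycle hA.2 I J hJ hAIJ (by omega)
    have hlb : ∀ y ∈ joinS f I, A I ≤ y := by
      intro y hy
      by_contra hlt
      push_neg at hlt
      exact hy.2 true I (hftrue ▸ hA.1 I) ⟨⟨y, hy.1, le_refl _⟩, by rw [hftrue]; omega⟩
    exact le_antisymm (Nat.sInf_le hmem) (hlb _ (Nat.sInf_mem (joinS_nonempty h𝕀 f I)))
  -- claim (a) : flipped edges
  have claim_a : ∀ I : Edge 𝕀, A I = i → j ∈ I.1 → A' I = j := by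
    intro I hAI hjI
    have hBI : B I = j := by
      have hBIle : B I ≤ j := by
        by_cases h : A I = B I
        · omega
        · exact hjmax I hAI h
      by_contra hne2
      have hBIlt : B I < j := lt_of_le_of_ne hBIle hne2
      have hBIH₁ : B I ∈ H₁.1 :=
        edge_interval h𝕀 H₁ hμmem hjH₁ (by have := hle I; omega) hBIlt.le
      exact no_two_cycle hB.2 I H₁ (hBH₁ ▸ hjI) hBIH₁ (by omega)
    have hmem : j ∈ joinS f I := by
      refine ⟨hjI, ?_⟩
      rintro b J hJ ⟨⟨z, hzJ, hz⟩, hlt⟩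
      cases b
      · -- D-block with D J > j : impossible
        rw [hffalse] at hJ hlt
        by_cases hc : j ∈ J.1 ∧ ∀ x ∈ J.1, μ ≤ x
        · have hDJ : D J = j := by rw [hDdef]; dsimp only; rw [if_pos hc]
          rw [hDJ] at hlt
          omega
        · have hDJ : D J = J.1.min' (edge_nonempty h𝕀 J) := by
            rw [hDdef]; dsimp only; rw [if_neg hc]
          rw [hDJ] at hlt
          have := J.1.min'_le _ hzJ
          omega
      · -- A-block at j : contradicts A ≤ B via K = I ∩ J
        rw [hftrue] at hJ hlt
        have hjJ : j ∈ J.1 := edge_interval h𝕀 J hzJ (hA.1 J) hz hlt.le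
        have hneK : (I.1 ∩ J.1).Nonempty := ⟨j, Finset.mem_inter.mpr ⟨hjI, hjJ⟩⟩
        set K : Edge 𝕀 := ⟨I.1 ∩ J.1, hcl I.1 I.2 J.1 J.2 hneK⟩ with hKdef
        have hwK : A J ∈ K.1 := Finset.mem_inter.mpr ⟨hJ, hA.1 J⟩
        have hAK : A K = A J :=
          value_eq_of_subset hA.2 hA.1 K J Finset.inter_subset_right hwK
        have hBK : B K = j := by
          have := value_eq_of_subset hB.2 hB.1 K I Finset.inter_subset_left
            (hBI ▸ Finset.mem_inter.mpr ⟨hjI, hjJ⟩)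
          rw [this, hBI]
        have := hle K
        omega
    have hlb : ∀ y ∈ joinS f I, j ≤ y := by
      intro y hy
      by_contra hlt
      push_neg at hlt
      by_cases hyi : y < i
      · exact hy.2 true I (hftrue ▸ (hAI ▸ hA.1 I))
          ⟨⟨y, hy.1, le_refl _⟩, by rw [hftrue]; omega⟩
      · push_neg at hyi
        exact hy.2 false H₁ (by rw [hffalse, hDH₁]; exact hjI)
          ⟨⟨μ, hμmem, by omega⟩, by rw [hffalse, hDH₁]; omega⟩
    exact le_antisymm (Nat.sInf_le hmem) (hlb _ (Nat.sInf_mem (joinS_nonempty h𝕀 f I)))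
  -- no edge containing i and j has A-value j
  have hF2b : ∀ H : Edge 𝕀, i ∈ H.1 → j ∈ H.1 → A H ≠ j := by
    intro H hiH hjH hAH
    have hneK : (H.1 ∩ H₁.1).Nonempty := ⟨j, Finset.mem_inter.mpr ⟨hjH, hjH₁⟩⟩
    set K : Edge 𝕀 := ⟨H.1 ∩ H₁.1, hcl H.1 H.2 H₁.1 H₁.2 hneK⟩ with hKdef
    have h1 : A K = A H :=
      value_eq_of_subset hA.2 hA.1 K H Finset.inter_subset_left
        (hAH ▸ Finset.mem_inter.mpr ⟨hjH, hjH₁⟩)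
    have h2 : A K = A H₁ :=
      value_eq_of_subset hA.2 hA.1 K H₁ Finset.inter_subset_right
        (hAH₁ ▸ Finset.mem_inter.mpr ⟨hiH, hiH₁⟩)
    omega
  have hA'H₁ : A' H₁ = j := claim_a H₁ hAH₁ hjH₁
  have hAA' : A ≠ A' := by
    intro h
    have := congrFun h H₁
    omega
  have h1i : 1 ≤ i ∧ i ≤ n := by
    have := edge_subset h𝕀 H₁ hiH₁
    simpa [Finset.mem_Icc] using this
  have hjn : j ≤ n := by
    have := edge_subset h𝕀 H₁ hjH₁
    simp [Finset.mem_Icc] at this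
    omega
  refine ⟨A', ⟨hA, ⟨hA'or, hA'acyc⟩, i, j, hAA', h1i.1, hij, hjn, ?_⟩,
    fun H => ⟨hAleA' H, hA'leB H⟩, hAA'⟩
  intro H
  constructor
  · intro hneH
    by_cases hc : A H = i ∧ j ∈ H.1
    · exact ⟨hc.1, claim_a H hc.1 hc.2⟩
    · exact absurd (claim_b H hc).symm hneH
  · intro hiH hjH
    constructor
    · intro hAH
      exact claim_a H hAH hjH
    · intro hA'H
      by_contra hAH
      have : A' H = A H := claim_b H (fun h => hAH h.1)
      exact hF2b H hiH hjH (by omega)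

end Flip

section Induct

variable {n : ℕ} {𝕀 : Finset (Finset ℕ)}

lemma flipstep_le {A A' : Edge 𝕀 → ℕ} (h : FlipStep n 𝕀 A A') : ∀ H, A H ≤ A' H := by
  obtain ⟨_, _, i, j, hne, h1, hij, hjn, hcond⟩ := h
  intro H
  by_cases he : A H = A' H
  · omega
  · obtain ⟨h2, h3⟩ := (hcond H).1 he
    omega

lemma leP_le {A B : Edge 𝕀 → ℕ} (h : leP n 𝕀 A B) : ∀ H, A H ≤ B H := by
  induction h with
  | refl => exact fun H => le_refl _
  | tail h₁ h₂ ih => exact fun H => le_trans (ih H) (flipstep_le h₂ H)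

lemma leP_of_pointwise_aux (h𝕀 : IsIntervalHypergraph n 𝕀)
    (hcl : ClosedUnderIntersection 𝕀) {B : Edge 𝕀 → ℕ} (hB : AcycOr 𝕀 B) :
    ∀ N (A : Edge 𝕀 → ℕ), AcycOr 𝕀 A → (∀ H, A H ≤ B H) →
      (∑ H ∈ 𝕀.attach, (B H - A H)) ≤ N → leP n 𝕀 A B := by
  intro N
  induction N with
  | zero =>
    intro A hA hle hN
    have hAB : A = B := by
      funext H
      have h1 := Finset.sum_eq_zero_iff.mp (Nat.le_zero.mp hN) H (Finset.mem_attach _ _)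
      have h2 := hle H
      omega
    rw [hAB]; exact Relation.ReflTransGen.refl
  | succ N ih =>
    intro A hA hle hN
    by_cases he : A = B
    · rw [he]; exact Relation.ReflTransGen.refl
    · obtain ⟨A', hstep, hbounds, hne'⟩ := exists_flipstep h𝕀 hcl hA hB hle he
      have hA'ac : AcycOr 𝕀 A' := hstep.2.1
      have hlt : ∑ H ∈ 𝕀.attach, (B H - A' H) < ∑ H ∈ 𝕀.attach, (B H - A H) := by
        obtain ⟨H₀, hH₀⟩ := Function.ne_iff.mp hne'
        refine Finset.sum_lt_sum (fun H _ => Nat.sub_le_sub_left (hbounds H).1 _)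
          ⟨H₀, Finset.mem_attach _ _, ?_⟩
        have h1 := (hbounds H₀).1
        have h2 := (hbounds H₀).2
        omega
      exact Relation.ReflTransGen.head hstep
        (ih A' hA'ac (fun H => (hbounds H).2) (by omega))

lemma leP_of_pointwise (h𝕀 : IsIntervalHypergraph n 𝕀)
    (hcl : ClosedUnderIntersection 𝕀) {A B : Edge 𝕀 → ℕ}
    (hA : AcycOr 𝕀 A) (hB : AcycOr 𝕀 B) (hle : ∀ H, A H ≤ B H) : leP n 𝕀 A B :=
  leP_of_pointwise_aux h𝕀 hcl hB _ A hA hle (le_refl _)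

end Induct


/-- For an interval hypergraph `𝕀` closed under intersection and
acyclic orientations `A_1, …, A_q`, the orientation `O` defined by
`O(I) = min (I \ ⋃_p ⋃ {[min J, A_p(J)) : J ∈ 𝕀, A_p(J) ∈ I})` is acyclic and is the
least upper bound of `{A_1, …, A_q}` in `P_𝕀`. -/
theorem stmt13 (n : ℕ) (hn : 1 ≤ n) (𝕀 : Finset (Finset ℕ))
    (h𝕀 : IsIntervalHypergraph n 𝕀) (hcl : ClosedUnderIntersection 𝕀)
    (q : ℕ) (hq : 1 ≤ q) (A : Fin q → Edge 𝕀 → ℕ) (hA : ∀ p, AcycOr 𝕀 (A p)) :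
    ∃ O : Edge 𝕀 → ℕ,
      (∀ H : Edge 𝕀, IsLeast {m | m ∈ H.1 ∧ ∀ (p : Fin q) (J : Edge 𝕀),
        A p J ∈ H.1 → ¬((∃ x ∈ J.1, x ≤ m) ∧ m < A p J)} (O H)) ∧
      AcycOr 𝕀 O ∧ (∀ p, leP n 𝕀 (A p) O) ∧
      ∀ C, AcycOr 𝕀 C → (∀ p, leP n 𝕀 (A p) C) → leP n 𝕀 O C := by
  have hOac : AcycOr 𝕀 (joinO A) := ⟨fun H => joinO_mem h𝕀 A H, joinO_acyclic h𝕀 A⟩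
  refine ⟨joinO A, fun H => joinO_isLeast h𝕀 A H, hOac, ?_, ?_⟩
  · intro p
    exact leP_of_pointwise h𝕀 hcl (hA p) hOac (fun H => joinO_ge h𝕀 p (hA p).1 H)
  · intro C hC hub
    exact leP_of_pointwise h𝕀 hcl hOac hC
      (fun H => joinO_le_ub h𝕀 hcl hA hC (fun p H' => leP_le (hub p) H') H)

end IHL
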